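/- Let ξ_n = 2^{-n/2} Σ_{i=2^n}^{2^{n+1}-1} e_i for n ≥ 1 (these are pairwise orthogonal unit vectors), and let V be the unique bounded operator (an isometry) on ℓ²(ℕ) with V e_n = ξ_n for all n ≥ 1. Then every bounded linear operator T on ℓ²(ℕ) such that both T and its Hilbert-space adjoint T* map ℓ¹(ℕ) into ℓ¹(ℕ) satisfies ‖T − V‖ ≥ 1/2 in operator norm. -/

import Mathlib

open scoped ENNReal

noncomputable abbrev ellTwo : Type := lp (fun _ : ℕ => ℂ) 2

/-- The standard orthonormal basis vectors of ℓ²(ℕ). -/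
noncomputable def e (n : ℕ) : ellTwo := lp.single 2 n (1 : ℂ)

/-- `ξ n = 2^{-n/2} ∑_{i=2^n}^{2^{n+1}-1} e i`. -/
noncomputable def xiVec (n : ℕ) : ellTwo :=
  ((Real.sqrt (2 ^ n) : ℝ) : ℂ)⁻¹ • ∑ i ∈ Finset.Icc (2 ^ n) (2 ^ (n + 1) - 1), e i

noncomputable abbrev ellOne : Type := lp (fun _ : ℕ => ℂ) 1

lemma norm_incl_aux (x : ellOne) (y : ellTwo) (h : ∀ i, y i = x i) : ‖y‖ ≤ ‖x‖ := by
  have h2 : (2 : ℝ≥0∞).toReal = 2 := by norm_num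
  have h1 : (1 : ℝ≥0∞).toReal = 1 := by norm_num
  have hsq : ‖y‖ ^ 2 ≤ ‖x‖ ^ 2 := by
    have := lp.norm_rpow_eq_tsum (p := 2) (by norm_num) y
    rw [h2] at this
    rw [← Real.rpow_two, ← Real.rpow_two, this]
    have hs1 : Summable fun i => ‖x i‖ := by
      have := (lp.memℓp x).summable (p := 1) (by norm_num)
      simpa [h1] using this
    have hsum : (∑' i, ‖y i‖ ^ (2:ℝ)) ≤ ∑' i, ‖x‖ * ‖x i‖ := by
      refine Summable.tsum_le_tsum (fun i => ?_) ?_ (hs1.mul_left _)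
      · rw [Real.rpow_two, sq, h i]
        exact mul_le_mul_of_nonneg_right (lp.norm_apply_le_norm one_ne_zero x i) (norm_nonneg _)
      · have := (lp.memℓp y).summable (p := 2) (by norm_num)
        simpa [h2] using this
    rw [tsum_mul_left] at hsum
    have hx1 : (∑' i, ‖x i‖) = ‖x‖ := by
      rw [lp.norm_eq_tsum_rpow (by norm_num) x]
      simp [h1]
    rw [hx1] at hsum
    exact hsum.trans_eq (by rw [Real.rpow_two, sq])
  calc ‖y‖ = Real.sqrt (‖y‖ ^ 2) := (Real.sqrt_sq (norm_nonneg _)).symm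
  _ ≤ Real.sqrt (‖x‖ ^ 2) := Real.sqrt_le_sqrt hsq
  _ = ‖x‖ := Real.sqrt_sq (norm_nonneg _)

noncomputable def incl : ellOne →L[ℂ] ellTwo :=
  LinearMap.mkContinuous
    { toFun := fun x => ⟨(x : ∀ _ : ℕ, ℂ), (lp.memℓp x).of_exponent_ge one_le_two⟩
      map_add' := fun x y => by ext i; simp [lp.coeFn_add]
      map_smul' := fun c x => by ext i; simp [lp.coeFn_smul] }
    1 (fun x => by simpa using norm_incl_aux x _ (fun i => rfl))

@[simp] lemma incl_apply (x : ellOne) (i : ℕ) : (incl x) i = x i := rfl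

noncomputable def sumF (S : Finset ℕ) : ellTwo →L[ℂ] ℂ :=
  LinearMap.mkContinuous
    { toFun := fun x => ∑ i ∈ S, x i
      map_add' := fun x y => by simp [lp.coeFn_add]; exact Finset.sum_add_distrib
      map_smul' := fun c x => by simp [lp.coeFn_smul, Finset.mul_sum] }
    S.card (fun x => by
      calc ‖∑ i ∈ S, x i‖ ≤ ∑ i ∈ S, ‖x i‖ := norm_sum_le _ _
      _ ≤ ∑ _i ∈ S, ‖x‖ := Finset.sum_le_sum (fun i _ => lp.norm_apply_le_norm two_ne_zero x i)
      _ = S.card * ‖x‖ := by simp [mul_comm])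

@[simp] lemma sumF_apply (S : Finset ℕ) (x : ellTwo) : sumF S x = ∑ i ∈ S, x i := rfl

/-- Cauchy–Schwarz: `‖sumF S x‖ ≤ √card * ‖x‖`. -/
lemma sumF_bound (S : Finset ℕ) (x : ellTwo) : ‖sumF S x‖ ≤ Real.sqrt S.card * ‖x‖ := by
  have h1 : ‖sumF S x‖ ≤ ∑ i ∈ S, ‖x i‖ := norm_sum_le _ _
  have h2 : (∑ i ∈ S, ‖x i‖) ^ 2 ≤ (S.card : ℝ) * ‖x‖ ^ 2 := by
    have cs := Finset.sum_mul_sq_le_sq_mul_sq S (fun i => ‖x i‖) (fun _ => (1:ℝ))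
    simp only [mul_one, one_pow, Finset.sum_const, nsmul_eq_mul] at cs
    have h3 : (∑ i ∈ S, ‖x i‖ ^ 2) ≤ ‖x‖ ^ 2 := by
      have := lp.sum_rpow_le_norm_rpow (p := 2) (by norm_num) x S
      simpa [Real.rpow_natCast, ENNReal.toReal_ofNat, Real.rpow_two] using this
    calc (∑ i ∈ S, ‖x i‖) ^ 2 ≤ (∑ i ∈ S, ‖x i‖ ^ 2) * S.card := cs
    _ ≤ ‖x‖ ^ 2 * S.card := mul_le_mul_of_nonneg_right h3 (Nat.cast_nonneg _)
    _ = (S.card : ℝ) * ‖x‖ ^ 2 := mul_comm _ _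
  have h4 : (∑ i ∈ S, ‖x i‖) ≤ Real.sqrt S.card * ‖x‖ := by
    have := Real.sqrt_le_sqrt h2
    rwa [Real.sqrt_sq (Finset.sum_nonneg fun i _ => norm_nonneg _),
      Real.sqrt_mul (Nat.cast_nonneg _), Real.sqrt_sq (norm_nonneg _)] at this
  exact h1.trans h4

noncomputable def eOne (n : ℕ) : ellOne := lp.single 1 n (1 : ℂ)

lemma norm_eOne (n : ℕ) : ‖eOne n‖ = 1 := by
  simpa [eOne] using lp.norm_single (E := fun _ : ℕ => ℂ) (p := 1) (by norm_num) n (1:ℂ)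

lemma norm_e (n : ℕ) : ‖e n‖ = 1 := by
  simpa [e] using lp.norm_single (E := fun _ : ℕ => ℂ) (p := 2) (by norm_num) n (1:ℂ)

lemma incl_eOne (n : ℕ) : incl (eOne n) = e n := by
  ext i
  simp only [incl_apply, eOne, e]
  rw [lp.single_apply, lp.single_apply]

abbrev In (n : ℕ) : Finset ℕ := Finset.Icc (2 ^ n) (2 ^ (n + 1) - 1)

lemma card_In (n : ℕ) : (In n).card = 2 ^ n := by
  rw [Nat.card_Icc]
  have h1 : (1:ℕ) ≤ 2 ^ (n+1) := Nat.one_le_two_pow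
  rw [pow_succ]
  omega

lemma sumF_xi (n : ℕ) : sumF (In n) (xiVec n) = ((Real.sqrt (2 ^ n) : ℝ) : ℂ) := by
  have hpos : (0:ℝ) < Real.sqrt (2 ^ n) := Real.sqrt_pos.2 (by positivity)
  have key : ∀ j, (xiVec n) j =
      ((Real.sqrt (2 ^ n) : ℝ) : ℂ)⁻¹ * (if j ∈ In n then 1 else 0) := by
    intro j
    rw [xiVec, lp.coeFn_smul, Pi.smul_apply, lp.coeFn_sum, Finset.sum_apply]
    congr 1
    simp [e, lp.single_apply, Finset.sum_dite_eq]
  rw [sumF_apply, Finset.sum_congr rfl (fun j _ => key j)]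
  rw [← Finset.mul_sum]
  have : (∑ j ∈ In n, if j ∈ In n then (1:ℂ) else 0) = ((2:ℂ) ^ n) := by
    rw [Finset.sum_ite_mem, Finset.inter_self, Finset.sum_const, card_In,
      nsmul_eq_mul, mul_one]
    push_cast
    ring
  rw [this]
  rw [inv_mul_eq_iff_eq_mul₀ (by exact_mod_cast hpos.ne'), ← Complex.ofReal_mul,
    Real.mul_self_sqrt (by positivity)]
  norm_cast

/-- if `V` is a bounded operator on ℓ²(ℕ) with `V eₙ = ξₙ` for all `n ≥ 1`,
then every bounded operator `T` on ℓ²(ℕ) such that both `T` and its Hilbert-space adjoint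
map ℓ¹(ℕ) into ℓ¹(ℕ) satisfies `‖T − V‖ ≥ 1/2`. -/
theorem stmt1 (V T : ellTwo →L[ℂ] ellTwo)
    (hV : ∀ n : ℕ, 1 ≤ n → V (e n) = xiVec n)
    (hT : ∀ x : ellTwo, Memℓp (fun i => x i) 1 → Memℓp (fun i => T x i) 1)
    (hTadj : ∀ x : ellTwo, Memℓp (fun i => x i) 1 →
      Memℓp (fun i => (ContinuousLinearMap.adjoint T) x i) 1) :
    1 / 2 ≤ ‖T - V‖ := by
  by_contra hcon
  push_neg at hcon
  -- the family of functionals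
  set g : ℕ → ellOne →L[ℂ] ℂ := fun n => (sumF (In n)).comp (T.comp incl) with hg
  -- pointwise boundedness
  have hpt : ∀ x : ellOne, ∃ C : ℝ, ∀ n : ℕ, ‖g n x‖ ≤ C := by
    intro x
    have hmem : Memℓp (fun i => T (incl x) i) 1 := by
      apply hT
      exact lp.memℓp x
    have hsummable : Summable fun i => ‖T (incl x) i‖ := by
      have := hmem.summable (p := 1) (by norm_num)
      simpa using this
    refine ⟨∑' i, ‖T (incl x) i‖, fun n => ?_⟩
    calc ‖g n x‖ = ‖∑ i ∈ In n, T (incl x) i‖ := rfl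
    _ ≤ ∑ i ∈ In n, ‖T (incl x) i‖ := norm_sum_le _ _
    _ ≤ ∑' i, ‖T (incl x) i‖ := Summable.sum_le_tsum _ (fun i _ => norm_nonneg _) hsummable
  obtain ⟨C, hC⟩ := banach_steinhaus hpt
  have hC0 : 0 ≤ C := (norm_nonneg (g 0)).trans (hC 0)
  -- the key lower bound
  have key : ∀ n : ℕ, 1 ≤ n → Real.sqrt (2 ^ n) ≤ 2 * C := by
    intro n hn
    have hgn : g n (eOne n) = sumF (In n) (T (e n)) := by
      simp only [hg, ContinuousLinearMap.comp_apply, incl_eOne]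
    have hVsum : sumF (In n) (V (e n)) = ((Real.sqrt (2 ^ n) : ℝ) : ℂ) := by
      rw [hV n hn, sumF_xi]
    have hub : ‖g n (eOne n)‖ ≤ C := by
      calc ‖g n (eOne n)‖ ≤ ‖g n‖ * ‖eOne n‖ := (g n).le_opNorm _
      _ = ‖g n‖ := by rw [norm_eOne, mul_one]
      _ ≤ C := hC n
    have hdiff : ‖sumF (In n) ((T - V) (e n))‖ ≤ Real.sqrt (2 ^ n) * (1/2) := by
      calc ‖sumF (In n) ((T - V) (e n))‖
          ≤ Real.sqrt (In n).card * ‖(T - V) (e n)‖ := sumF_bound _ _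
      _ = Real.sqrt (2 ^ n) * ‖(T - V) (e n)‖ := by rw [card_In]; norm_cast
      _ ≤ Real.sqrt (2 ^ n) * (‖T - V‖ * ‖e n‖) :=
          mul_le_mul_of_nonneg_left ((T - V).le_opNorm _) (Real.sqrt_nonneg _)
      _ ≤ Real.sqrt (2 ^ n) * (1/2) := by
          rw [norm_e, mul_one]
          exact mul_le_mul_of_nonneg_left hcon.le (Real.sqrt_nonneg _)
    have hsplit : sumF (In n) (V (e n)) = sumF (In n) (T (e n)) - sumF (In n) ((T - V) (e n)) := by
      rw [ContinuousLinearMap.sub_apply, map_sub]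
      ring
    have hnorm : Real.sqrt (2 ^ n) ≤ C + Real.sqrt (2 ^ n) * (1/2) := by
      have h5 : ‖sumF (In n) (V (e n))‖ = Real.sqrt (2 ^ n) := by
        rw [hVsum, Complex.norm_real, Real.norm_eq_abs, abs_of_nonneg (Real.sqrt_nonneg _)]
      calc Real.sqrt (2 ^ n) = ‖sumF (In n) (V (e n))‖ := h5.symm
      _ ≤ ‖sumF (In n) (T (e n))‖ + ‖sumF (In n) ((T - V) (e n))‖ := by
          rw [hsplit]; exact norm_sub_le _ _
      _ ≤ C + Real.sqrt (2 ^ n) * (1/2) := by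
          rw [← hgn]
          exact add_le_add hub hdiff
    linarith
  -- contradiction: 2^n is unbounded
  obtain ⟨m, hm⟩ := pow_unbounded_of_one_lt ((2 * C) ^ 2) (one_lt_two (α := ℝ))
  have h1 := key (m + 1) (Nat.le_add_left 1 m)
  have h2 : (2:ℝ) ^ (m + 1) ≤ (2 * C) ^ 2 := by
    have := pow_le_pow_left₀ (Real.sqrt_nonneg _) h1 2
    rwa [Real.sq_sqrt (by positivity)] at this
  have h3 : (2:ℝ) ^ m ≤ (2:ℝ) ^ (m + 1) := by
    apply pow_le_pow_right₀ one_le_two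
    omega
  linarith
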